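/- Let C be a ℚ-linear monoidal category (monoidal, preadditive, with ℚ-module Hom groups, such that tensor product of morphisms is ℚ-bilinear, i.e. MonoidalPreadditive and MonoidalLinear over ℚ). Let X and Y be objects, let m : X ⊗ X → X be a morphism, let k be a nonzero rational number, and let f : X → Y and g : Y → X be morphisms with f ∘ g = k • 𝟙_Y. Let π : ℤ → End(X) be a family of endomorphisms of X such that each π_i commutes with g ∘ f, and such that π_c ∘ m ∘ (π_a ⊗ π_b) = 0 whenever c ≠ a + b. Define m_Y := f ∘ m ∘ (g ⊗ g) : Y ⊗ Y → Y and q_i := k⁻¹ • (f ∘ π_i ∘ g) ∈ End(Y). Then q_c ∘ m_Y ∘ (q_a ⊗ q_b) = 0 whenever c ≠ a + b. -/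

import Mathlib

open CategoryTheory CategoryTheory.MonoidalCategory

/-- Multiplicativity of a family of projectors descends through a "degree `k`
quotient": if `π : ℤ → End X` satisfies `π c ∘ m ∘ (π a ⊗ₘ π b) = 0` for `c ≠ a + b`,
each `π i` commutes with `g ∘ f`, and `f ∘ g = k • 𝟙 Y` with `k ≠ 0`, then the
conjugated projectors `q i = k⁻¹ • (f ∘ π i ∘ g)` satisfy the same multiplicativity
relation with respect to `m_Y = f ∘ m ∘ (g ⊗ₘ g)`. -/
theorem conjugate_multiplicative_projectors {C : Type*} [Category C]
    [MonoidalCategory C] [Preadditive C] [Linear ℚ C] [MonoidalPreadditive C]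
    [MonoidalLinear ℚ C] {X Y : C} (m : X ⊗ X ⟶ X) (k : ℚ) (hk : k ≠ 0)
    (f : X ⟶ Y) (g : Y ⟶ X) (hfg : g ≫ f = k • 𝟙 Y)
    (π : ℤ → (X ⟶ X))
    (hcomm : ∀ i, (f ≫ g) ≫ π i = π i ≫ (f ≫ g))
    (hmul : ∀ a b c : ℤ, c ≠ a + b → (π a ⊗ₘ π b) ≫ m ≫ π c = 0) :
    ∀ a b c : ℤ, c ≠ a + b →
      ((k⁻¹ • (g ≫ π a ≫ f)) ⊗ₘ (k⁻¹ • (g ≫ π b ≫ f))) ≫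
        ((g ⊗ₘ g) ≫ m ≫ f) ≫ (k⁻¹ • (g ≫ π c ≫ f)) = 0 := by
  intro a b c hne
  have hTs : ∀ {A B A' B' : C} (r s : ℚ) (u : A ⟶ B) (v : A' ⟶ B'),
      (r • u) ⊗ₘ (s • v) = (r * s) • (u ⊗ₘ v) := by
    intro A B A' B' r s u v
    simp [MonoidalCategory.tensorHom_def, smul_smul, mul_comm]
  have h1 : ∀ i, (g ≫ π i ≫ f) ≫ g = k • (g ≫ π i) := by
    intro i
    simp only [Category.assoc, ← hcomm i]
    rw [reassoc_of% hfg]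
    simp
  have h2 : f ≫ (g ≫ π c ≫ f) = k • (π c ≫ f) := by
    rw [reassoc_of% hcomm c, hfg]
    simp
  calc ((k⁻¹ • (g ≫ π a ≫ f)) ⊗ₘ (k⁻¹ • (g ≫ π b ≫ f))) ≫
        ((g ⊗ₘ g) ≫ m ≫ f) ≫ (k⁻¹ • (g ≫ π c ≫ f))
      = (k⁻¹ * k⁻¹ * k⁻¹) •
          ((((g ≫ π a ≫ f) ≫ g) ⊗ₘ ((g ≫ π b ≫ f) ≫ g)) ≫ m ≫
            (f ≫ (g ≫ π c ≫ f))) := by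
        simp only [hTs, Linear.smul_comp, Linear.comp_smul, smul_smul,
          tensorHom_comp_tensorHom_assoc, Category.assoc]
        ring_nf
    _ = (k⁻¹ * k⁻¹ * k⁻¹) • ((k • (g ≫ π a)) ⊗ₘ (k • (g ≫ π b))) ≫ m ≫
          (k • (π c ≫ f)) := by rw [h1 a, h1 b, h2]
    _ = (k⁻¹ * k⁻¹ * k⁻¹ * (k * k * k)) •
          ((g ⊗ₘ g) ≫ ((π a ⊗ₘ π b) ≫ m ≫ π c) ≫ f) := by
        simp only [hTs, Linear.smul_comp, Linear.comp_smul, smul_smul,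
          tensorHom_comp_tensorHom_assoc, Category.assoc]
        ring_nf
    _ = 0 := by rw [hmul a b c hne]; simp
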